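/- Work in the polynomial ring ℤ[ψ1, θ1, λ1, λ2]. Let J₀ ⊂ ℤ[ψ1, λ1, λ2] be the ideal generated by λ2 − ψ1(λ1−ψ1), λ1(24λ1² − 48λ2) and 20λ1²λ2. Let F₁ : ℤ[ψ1,θ1,λ1,λ2] → ℤ[ψ1,λ1,λ2]/J₀ be the ring homomorphism sending θ1 ↦ 0 and each other variable to the class of the like-named variable, and let F₂ : ℤ[ψ1,θ1,λ1,λ2] → ℤ[ψ1,λ1] be the ring homomorphism sending ψ1 ↦ ψ1, λ1 ↦ λ1, θ1 ↦ −λ1, λ2 ↦ ψ1(λ1−ψ1). Then ker F₁ ∩ ker F₂ equals the ideal generated by λ2 − ψ1(λ1−ψ1), (λ1+θ1)(24λ1²−48λ2), 20(λ1+θ1)λ1λ2, and θ1(λ1+θ1). -/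

import Mathlib

open MvPolynomial

/-- The ideal `J₀ ⊂ ℤ[ψ1, λ1, λ2]` generated by `λ2 − ψ1(λ1−ψ1)`,
`λ1(24λ1² − 48λ2)` and `20λ1²λ2`.  Variables: `ψ1 = X 0`, `λ1 = X 1`, `λ2 = X 2`. -/
noncomputable def J₀ : Ideal (MvPolynomial (Fin 3) ℤ) :=
  Ideal.span {X 2 - X 0 * (X 1 - X 0), X 1 * (24 * X 1 ^ 2 - 48 * X 2), 20 * X 1 ^ 2 * X 2}

/-- `F₁ : ℤ[ψ1,θ1,λ1,λ2] → ℤ[ψ1,λ1,λ2]/J₀`, sending `θ1 ↦ 0` and each other variable to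
the class of the like-named variable.  Source variables: `ψ1 = X 0`, `θ1 = X 1`,
`λ1 = X 2`, `λ2 = X 3`. -/
noncomputable def F₁ : MvPolynomial (Fin 4) ℤ →+* MvPolynomial (Fin 3) ℤ ⧸ J₀ :=
  (Ideal.Quotient.mk J₀).comp
    ((aeval ![X 0, 0, X 1, X 2] : MvPolynomial (Fin 4) ℤ →ₐ[ℤ] MvPolynomial (Fin 3) ℤ) :
      MvPolynomial (Fin 4) ℤ →+* MvPolynomial (Fin 3) ℤ)

/-- `F₂ : ℤ[ψ1,θ1,λ1,λ2] → ℤ[ψ1,λ1]`, sending `ψ1 ↦ ψ1`, `λ1 ↦ λ1`, `θ1 ↦ −λ1`,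
`λ2 ↦ ψ1(λ1−ψ1)`.  Target variables: `ψ1 = X 0`, `λ1 = X 1`. -/
noncomputable def F₂ : MvPolynomial (Fin 4) ℤ →+* MvPolynomial (Fin 2) ℤ :=
  ((aeval ![X 0, -X 1, X 1, X 0 * (X 1 - X 0)] :
      MvPolynomial (Fin 4) ℤ →ₐ[ℤ] MvPolynomial (Fin 2) ℤ) :
    MvPolynomial (Fin 4) ℤ →+* MvPolynomial (Fin 2) ℤ)

noncomputable def emb : MvPolynomial (Fin 2) ℤ →ₐ[ℤ] MvPolynomial (Fin 4) ℤ := aeval ![X 0, X 2]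
noncomputable def emb3 : MvPolynomial (Fin 2) ℤ →ₐ[ℤ] MvPolynomial (Fin 3) ℤ := aeval ![X 0, X 1]
noncomputable def A₁ : MvPolynomial (Fin 4) ℤ →ₐ[ℤ] MvPolynomial (Fin 3) ℤ := aeval ![X 0, 0, X 1, X 2]
noncomputable def A₂ : MvPolynomial (Fin 4) ℤ →ₐ[ℤ] MvPolynomial (Fin 2) ℤ := aeval ![X 0, -X 1, X 1, X 0 * (X 1 - X 0)]
noncomputable def σm : MvPolynomial (Fin 3) ℤ →ₐ[ℤ] MvPolynomial (Fin 2) ℤ := aeval ![X 0, X 1, X 0 * (X 1 - X 0)]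

lemma A₂_emb (t : MvPolynomial (Fin 2) ℤ) : A₂ (emb t) = t := by
  have h : A₂.comp emb = AlgHom.id ℤ _ := by
    apply MvPolynomial.algHom_ext; intro i; fin_cases i <;> simp [emb, A₂]
  simpa using congrArg (fun f => f t) h

lemma A₁_emb (t : MvPolynomial (Fin 2) ℤ) : A₁ (emb t) = emb3 t := by
  have h : A₁.comp emb = emb3 := by
    apply MvPolynomial.algHom_ext; intro i; fin_cases i <;> simp [emb, A₁, emb3]
  simpa using congrArg (fun f => f t) h

lemma σm_emb3 (t : MvPolynomial (Fin 2) ℤ) : σm (emb3 t) = t := by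
  have h : σm.comp emb3 = AlgHom.id ℤ _ := by
    apply MvPolynomial.algHom_ext; intro i; fin_cases i <;> simp [emb3, σm]
  simpa using congrArg (fun f => f t) h

lemma decomp (p : MvPolynomial (Fin 4) ℤ) :
    ∃ a q r s, p = a * (X 3 - X 0 * (X 2 - X 0)) + X 1 * (X 1 + X 2) * q
      + (X 1 + X 2) * emb r + emb s := by
  induction p using MvPolynomial.induction_on with
  | C n =>
      exact ⟨0, 0, 0, C n, by simp [emb]⟩
  | add p p' hp hp' =>
      obtain ⟨a, q, r, s, h⟩ := hp
      obtain ⟨a', q', r', s', h'⟩ := hp'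
      exact ⟨a + a', q + q', r + r', s + s', by rw [h, h']; simp only [map_add]; ring⟩
  | mul_X p i hp =>
      obtain ⟨a, q, r, s, h⟩ := hp
      fin_cases i
      · exact ⟨a * X 0, q * X 0, r * X 0, s * X 0, by
          rw [h]; simp only [Fin.mk_zero, Fin.mk_one, Fin.reduceFinMk, map_mul, emb, aeval_X, Matrix.cons_val_zero]; ring⟩
      · exact ⟨a * X 1, q * X 1 + emb r, s, -(X 1 * s), by
          rw [h]; simp only [Fin.mk_zero, Fin.mk_one, Fin.reduceFinMk, map_mul, map_neg, emb, aeval_X, Matrix.cons_val_zero,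
            Matrix.cons_val_one, Matrix.head_cons]; ring⟩
      · exact ⟨a * X 2, q * X 2, X 1 * r, X 1 * s, by
          rw [h]; simp only [Fin.mk_zero, Fin.mk_one, Fin.reduceFinMk, map_mul, emb, aeval_X, Matrix.cons_val_zero,
            Matrix.cons_val_one, Matrix.head_cons]; ring⟩
      · exact ⟨p + a * (X 0 * (X 2 - X 0)), q * (X 0 * (X 2 - X 0)),
          r * (X 0 * (X 1 - X 0)), s * (X 0 * (X 1 - X 0)), by
          conv_lhs => rw [h]
          conv_rhs => rw [h]
          simp only [Fin.mk_zero, Fin.mk_one, Fin.reduceFinMk, map_mul, map_sub, emb, aeval_X, Matrix.cons_val_zero,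
            Matrix.cons_val_one, Matrix.head_cons]; ring⟩

/-- `ker F₁ ∩ ker F₂` equals the ideal generated by `λ2 − ψ1(λ1−ψ1)`,
`(λ1+θ1)(24λ1²−48λ2)`, `20(λ1+θ1)λ1λ2` and `θ1(λ1+θ1)`. -/
theorem ker_inf_ker_eq_I₄ :
    RingHom.ker F₁ ⊓ RingHom.ker F₂ =
      Ideal.span {X 3 - X 0 * (X 2 - X 0),
        (X 2 + X 1) * (24 * X 2 ^ 2 - 48 * X 3),
        20 * (X 2 + X 1) * X 2 * X 3,
        X 1 * (X 2 + X 1)} := by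
  apply le_antisymm
  · intro p hp
    obtain ⟨h1, h2⟩ := Submodule.mem_inf.mp hp
    rw [RingHom.mem_ker] at h1 h2
    obtain ⟨a, q, r, s, hdec⟩ := decomp p
    -- step 1 : s = 0
    have h2' : A₂ p = 0 := h2
    have hs : s = 0 := by
      rw [hdec] at h2'
      have e1 : A₂ (X 3 - X 0 * (X 2 - X 0)) = 0 := by
        simp only [A₂, map_sub, map_mul, aeval_X, Matrix.cons_val_zero, Matrix.cons_val_one,
          Matrix.head_cons, Matrix.cons_val_two, Matrix.tail_cons, Matrix.cons_val_three] <;> ring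
      have e2 : A₂ (X 1 + X 2) = 0 := by
        simp only [A₂, map_add, aeval_X, Matrix.cons_val_one, Matrix.head_cons,
          Matrix.cons_val_two, Matrix.tail_cons, Matrix.cons_val_zero] <;> ring
      rw [map_add, map_add, map_add, map_mul, map_mul, map_mul, map_mul, e1, e2, A₂_emb,
        A₂_emb] at h2'
      simpa using h2'
    -- step 2 : X 1 * emb3 r ∈ J₀
    have h1' : (Ideal.Quotient.mk J₀) (A₁ p) = 0 := h1
    rw [hdec, hs] at h1'
    have eA : A₁ (a * (X 3 - X 0 * (X 2 - X 0)) + X 1 * (X 1 + X 2) * q + (X 1 + X 2) * emb r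
          + emb 0)
        = A₁ a * (X 2 - X 0 * (X 1 - X 0)) + X 1 * emb3 r := by
      have v0 : A₁ (X 0) = X 0 := by simp [A₁]
      have v1 : A₁ (X 1) = 0 := by simp [A₁]
      have v2 : A₁ (X 2) = X 1 := by simp [A₁]
      have v3 : A₁ (X 3) = X 2 := by simp [A₁]
      simp only [map_add, map_mul, map_sub, map_zero, A₁_emb, v0, v1, v2, v3]
      ring
    rw [eA] at h1'
    have hmem := Ideal.Quotient.eq_zero_iff_mem.mp h1'
    have hj1 : (X 2 - X 0 * (X 1 - X 0) : MvPolynomial (Fin 3) ℤ) ∈ J₀ :=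
      Ideal.subset_span (by simp [J₀])
    have hm : X 1 * emb3 r ∈ J₀ := by
      have := J₀.sub_mem hmem (Ideal.mul_mem_left _ (A₁ a) hj1)
      simpa using this
    -- step 3 : transport along σm
    have h3 := Ideal.mem_map_of_mem (σm : MvPolynomial (Fin 3) ℤ →ₐ[ℤ] MvPolynomial (Fin 2) ℤ) hm
    have hσval : σm (X 1 * emb3 r) = X 1 * r := by
      rw [map_mul, σm_emb3]
      congr 1
      simp [σm]
    rw [hσval] at h3
    have hle : Ideal.map σm J₀ ≤ Ideal.span ({X 1 * (24 * X 1 ^ 2 - 48 * (X 0 * (X 1 - X 0))),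
        X 1 * (20 * X 1 * (X 0 * (X 1 - X 0)))} : Set (MvPolynomial (Fin 2) ℤ)) := by
      rw [J₀, Ideal.map_span, Ideal.span_le]
      rintro y ⟨g, hg, rfl⟩
      simp only [Set.mem_insert_iff, Set.mem_singleton_iff] at hg
      rcases hg with rfl | rfl | rfl
      · have : σm (X 2 - X 0 * (X 1 - X 0)) = 0 := by simp [σm]
        rw [this]; exact Submodule.zero_mem _
      · have : σm (X 1 * (24 * X 1 ^ 2 - 48 * X 2))
            = X 1 * (24 * X 1 ^ 2 - 48 * (X 0 * (X 1 - X 0))) := by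
          simp only [σm, map_mul, map_sub, map_pow, map_ofNat, aeval_X, Matrix.cons_val_zero,
            Matrix.cons_val_one, Matrix.head_cons, Matrix.cons_val_two, Matrix.tail_cons] <;> ring
        rw [this]; exact Ideal.subset_span (by left; rfl)
      · have : σm (20 * X 1 ^ 2 * X 2) = X 1 * (20 * X 1 * (X 0 * (X 1 - X 0))) := by
          simp only [σm, map_mul, map_sub, map_pow, map_ofNat, aeval_X, Matrix.cons_val_zero,
            Matrix.cons_val_one, Matrix.head_cons, Matrix.cons_val_two, Matrix.tail_cons] <;> ring
        rw [this]; exact Ideal.subset_span (by right; rfl)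
    have hT := hle h3
    rw [Ideal.mem_span_insert] at hT
    obtain ⟨c2, z, hz, heq⟩ := hT
    rw [Ideal.mem_span_singleton'] at hz
    obtain ⟨c3, hz⟩ := hz
    have hr : r = c2 * (24 * X 1 ^ 2 - 48 * (X 0 * (X 1 - X 0)))
        + c3 * (20 * X 1 * (X 0 * (X 1 - X 0))) := by
      apply mul_left_cancel₀ (X_ne_zero (R := ℤ) (1 : Fin 2))
      rw [heq, ← hz]; ring
    -- step 4 : final combination
    have ea : emb (24 * X 1 ^ 2 - 48 * (X 0 * (X 1 - X 0)))
        = 24 * X 2 ^ 2 - 48 * (X 0 * (X 2 - X 0)) := by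
      simp only [emb, map_mul, map_sub, map_pow, map_ofNat, aeval_X, Matrix.cons_val_zero,
        Matrix.cons_val_one, Matrix.head_cons] <;> ring
    have eb : emb (20 * X 1 * (X 0 * (X 1 - X 0))) = 20 * X 2 * (X 0 * (X 2 - X 0)) := by
      simp only [emb, map_mul, map_sub, map_ofNat, aeval_X, Matrix.cons_val_zero,
        Matrix.cons_val_one, Matrix.head_cons] <;> ring
    have hfin : p = (a + 48 * (X 1 + X 2) * emb c2 - 20 * (X 1 + X 2) * X 2 * emb c3)
          * (X 3 - X 0 * (X 2 - X 0))
        + emb c2 * ((X 2 + X 1) * (24 * X 2 ^ 2 - 48 * X 3))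
        + emb c3 * (20 * (X 2 + X 1) * X 2 * X 3)
        + q * (X 1 * (X 2 + X 1)) := by
      rw [hdec, hs, hr, map_zero, map_add, map_mul, map_mul, ea, eb]
      ring
    rw [hfin]
    refine Ideal.add_mem _ (Ideal.add_mem _ (Ideal.add_mem _ ?_ ?_) ?_) ?_ <;>
      exact Ideal.mul_mem_left _ _ (Ideal.subset_span (by simp))
  · rw [Ideal.span_le]
    intro x hx
    simp only [Set.mem_insert_iff, Set.mem_singleton_iff] at hx
    have mk0 : ∀ g : MvPolynomial (Fin 4) ℤ, A₁ g ∈ J₀ → A₂ g = 0 → x = g →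
        x ∈ (RingHom.ker F₁ ⊓ RingHom.ker F₂ : Ideal (MvPolynomial (Fin 4) ℤ)) := by
      rintro g hg1 hg2 rfl
      refine Submodule.mem_inf.mpr ⟨?_, ?_⟩
      · show (Ideal.Quotient.mk J₀) (A₁ x) = 0
        rwa [Ideal.Quotient.eq_zero_iff_mem]
      · exact hg2
    rcases hx with rfl | rfl | rfl | rfl
    · refine mk0 _ ?_ ?_ rfl
      · have : A₁ (X 3 - X 0 * (X 2 - X 0)) = X 2 - X 0 * (X 1 - X 0) := by
          simp only [A₁, map_sub, map_mul, aeval_X, Matrix.cons_val_zero, Matrix.cons_val_one,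
            Matrix.head_cons, Matrix.cons_val_two, Matrix.tail_cons, Matrix.cons_val_three] <;> ring
        rw [this]; exact Ideal.subset_span (by simp [J₀])
      · simp only [A₂, map_sub, map_mul, aeval_X, Matrix.cons_val_zero, Matrix.cons_val_one,
          Matrix.head_cons, Matrix.cons_val_two, Matrix.tail_cons, Matrix.cons_val_three] <;> ring
    · refine mk0 _ ?_ ?_ rfl
      · have : A₁ ((X 2 + X 1) * (24 * X 2 ^ 2 - 48 * X 3))
            = X 1 * (24 * X 1 ^ 2 - 48 * X 2) := by
          simp only [A₁, map_add, map_sub, map_mul, map_pow, map_ofNat, aeval_X,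
            Matrix.cons_val_zero, Matrix.cons_val_one, Matrix.head_cons, Matrix.cons_val_two,
            Matrix.tail_cons, Matrix.cons_val_three] <;> ring
        rw [this]; exact Ideal.subset_span (by simp [J₀])
      · simp only [A₂, map_add, map_sub, map_mul, map_pow, map_ofNat, aeval_X,
          Matrix.cons_val_zero, Matrix.cons_val_one, Matrix.head_cons, Matrix.cons_val_two,
          Matrix.tail_cons, Matrix.cons_val_three] <;> ring
    · refine mk0 _ ?_ ?_ rfl
      · have : A₁ (20 * (X 2 + X 1) * X 2 * X 3) = 20 * X 1 ^ 2 * X 2 := by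
          simp only [A₁, map_add, map_mul, map_ofNat, aeval_X, Matrix.cons_val_zero,
            Matrix.cons_val_one, Matrix.head_cons, Matrix.cons_val_two, Matrix.tail_cons,
            Matrix.cons_val_three] <;> ring
        rw [this]; exact Ideal.subset_span (by simp [J₀])
      · simp only [A₂, map_add, map_mul, map_ofNat, aeval_X, Matrix.cons_val_zero,
          Matrix.cons_val_one, Matrix.head_cons, Matrix.cons_val_two, Matrix.tail_cons,
          Matrix.cons_val_three] <;> ring
    · refine mk0 _ ?_ ?_ rfl
      · have : A₁ (X 1 * (X 2 + X 1)) = 0 := by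
          simp only [A₁, map_add, map_mul, aeval_X, Matrix.cons_val_one, Matrix.head_cons,
            Matrix.cons_val_two, Matrix.tail_cons, Matrix.cons_val_zero] <;> ring
        rw [this]; exact Submodule.zero_mem _
      · simp only [A₂, map_add, map_mul, aeval_X, Matrix.cons_val_one, Matrix.head_cons,
          Matrix.cons_val_two, Matrix.tail_cons, Matrix.cons_val_zero] <;> ring
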